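/- For any P/T nets with boundaries M : l → m and N : m → n, the set Synch(M, N) of minimal synchronisations between M and N is finite. -/

import Mathlib

/-- A P/T net with boundaries `m → n` (well-formedness in `PTNet.Valid`). -/
structure PTNet (m n : ℕ) : Type 1 where
  P : Type
  T : Type
  pre : T → Multiset P
  post : T → Multiset P
  src : T → Multiset (Fin m)
  tgt : T → Multiset (Fin n)

namespace PTNet

variable {k l m n : ℕ}

/-- Linear extension of `pre` to multisets of transitions. -/
def preM (N : PTNet m n) (U : Multiset N.T) : Multiset N.P := (U.map N.pre).sum
def postM (N : PTNet m n) (U : Multiset N.T) : Multiset N.P := (U.map N.post).sum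
def srcM (N : PTNet m n) (U : Multiset N.T) : Multiset (Fin m) := (U.map N.src).sum
def tgtM (N : PTNet m n) (U : Multiset N.T) : Multiset (Fin n) := (U.map N.tgt).sum

/-- Well-formedness: finiteness and distinct footprints. -/
def Valid (N : PTNet m n) : Prop :=
  Finite N.P ∧ Finite N.T ∧
  ∀ t u : N.T, N.pre t = N.pre u → N.post t = N.post u →
    N.src t = N.src u → N.tgt t = N.tgt u → t = u

/-- Strong firing of P/T nets: `N_X →_U N_Y`. -/
def SFire (N : PTNet m n) (X : Multiset N.P) (U : Multiset N.T)
    (Y : Multiset N.P) : Prop :=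
  letI := Classical.decEq N.P
  N.preM U ≤ X ∧ N.postM U ≤ Y ∧ X - N.preM U = Y - N.postM U

/-- Weak (banking) firing of P/T nets: `N_X ⇒_U N_Y`. -/
def WFire (N : PTNet m n) (X : Multiset N.P) (U : Multiset N.T)
    (Y : Multiset N.P) : Prop :=
  Y + N.preM U = X + N.postM U

/-- Characteristic function `χ : Multiset (Fin k) → ℕ^k`. -/
def chiM {k : ℕ} (M : Multiset (Fin k)) : Fin k → ℕ := fun i => M.count i

/-- Strong labelled semantics of P/T nets with boundaries. -/
def SLts (N : PTNet m n) (X : Multiset N.P) (α : Fin m → ℕ) (β : Fin n → ℕ)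
    (Y : Multiset N.P) : Prop :=
  ∃ U : Multiset N.T, N.SFire X U Y ∧ α = chiM (N.srcM U) ∧ β = chiM (N.tgtM U)

/-- Weak labelled semantics of P/T nets with boundaries. -/
def WLts (N : PTNet m n) (X : Multiset N.P) (α : Fin m → ℕ) (β : Fin n → ℕ)
    (Y : Multiset N.P) : Prop :=
  ∃ U : Multiset N.T, N.WFire X U Y ∧ α = chiM (N.srcM U) ∧ β = chiM (N.tgtM U)

/-- Synchronisation between P/T nets with a common boundary. -/
def Synch (M : PTNet l m) (N : PTNet m n) (U : Multiset M.T)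
    (V : Multiset N.T) : Prop :=
  ¬(U = 0 ∧ V = 0) ∧ M.tgtM U = N.srcM V

/-- Minimal synchronisation. -/
def MinSynch (M : PTNet l m) (N : PTNet m n) (U : Multiset M.T)
    (V : Multiset N.T) : Prop :=
  Synch M N U V ∧
    ∀ U' V', Synch M N U' V' → U' ≤ U → V' ≤ V → U' = U ∧ V' = V

end PTNet

/-- for any P/T nets with boundaries `M : l → m` and
`N : m → n`, the set of minimal synchronisations `Synch(M,N)` is finite. -/
theorem stmt3 {l m n : ℕ} (M : PTNet l m) (N : PTNet m n)
    (hM : M.Valid) (hN : N.Valid) :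
    Set.Finite {p : Multiset M.T × Multiset N.T | PTNet.MinSynch M N p.1 p.2} := by

  classical
  by_contra hinf
  have hinf2 : {p : Multiset M.T × Multiset N.T | PTNet.MinSynch M N p.1 p.2}.Infinite := hinf
  haveI : Finite M.T := hM.2.1
  haveI : Finite N.T := hN.2.1
  set S := {p : Multiset M.T × Multiset N.T | PTNet.MinSynch M N p.1 p.2}
  let f := hinf2.natEmbedding
  -- counts map
  let g : ℕ → (M.T → ℕ) × (N.T → ℕ) :=
    fun k => (fun t => (f k).1.1.count t, fun t => (f k).1.2.count t)
  have hpwo : (Set.univ : Set ((M.T → ℕ) × (N.T → ℕ))).IsPWO := by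
    haveI : IsWellOrder ℕ (· < ·) := inferInstance
    have h1 : (Set.univ : Set (M.T → ℕ)).IsPWO :=
      Set.isPWO_of_wellQuasiOrderedLE _
    have h2 : (Set.univ : Set (N.T → ℕ)).IsPWO :=
      Set.isPWO_of_wellQuasiOrderedLE _
    have := h1.prod h2
    simpa [Set.univ_prod_univ] using this
  obtain ⟨a, b, hab, hle⟩ : ∃ a b, a < b ∧ g a ≤ g b := hpwo (fun k => ⟨g k, Set.mem_univ _⟩)
  have hle' : (f a).1 ≤ (f b).1 := by
    rw [Prod.le_def] at hle ⊢
    constructor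
    · exact Multiset.le_iff_count.mpr fun t => hle.1 t
    · exact Multiset.le_iff_count.mpr fun t => hle.2 t
  have hma : PTNet.MinSynch M N (f a).1.1 (f a).1.2 := (f a).2
  have hmb : PTNet.MinSynch M N (f b).1.1 (f b).1.2 := (f b).2
  have heq := hmb.2 (f a).1.1 (f a).1.2 hma.1 hle'.1 hle'.2
  have : (f a).1 = (f b).1 := Prod.ext heq.1 heq.2
  have : f a = f b := Subtype.ext this
  exact absurd (f.injective this) hab.ne
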